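/- arXiv:1104.5634 — 6 statements merged into one kernel-verified Lean document; each statement's English description precedes it below -/
import Mathlib

section
/- For any two labels ℓ and ℓ' with anchor points p ∈ ℓ and p' ∈ ℓ', the conflict set C(ℓ,ℓ'), viewed as a subset of the circle ℝ/2πℤ, is the union of at most four closed circular arcs (i.e., there exist at most four closed arcs of the circle whose union equals C(ℓ,ℓ')). -/
open Real Set

/-- Rotation of the plane about the origin by angle `α` (counterclockwise). -/
noncomputable def rot (α : ℝ) (v : ℝ × ℝ) : ℝ × ℝ :=
  (v.1 * Real.cos α - v.2 * Real.sin α, v.1 * Real.sin α + v.2 * Real.cos α)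

/-- The image of a set under rotation by `α` about the point `p`. -/
noncomputable def rotAbout (p : ℝ × ℝ) (α : ℝ) (s : Set (ℝ × ℝ)) : Set (ℝ × ℝ) :=
  (fun x => p + rot α (x - p)) '' s

/-- The closed axis-aligned rectangle containing its anchor point `p`, with distances
`wl, wr, hb, ht` from `p` to the left, right, bottom and top sides. -/
noncomputable def rectLabel (p : ℝ × ℝ) (wl wr hb ht : ℝ) : Set (ℝ × ℝ) :=
  Set.Icc (p.1 - wl, p.2 - hb) (p.1 + wr, p.2 + ht)

/-- A closed circular arc of the circle `ℝ/2πℤ` (possibly empty, possibly the full circle):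
the image of a closed interval of `ℝ` under the projection `ℝ → ℝ/2πℤ`. -/
def IsClosedArc (S : Set Real.Angle) : Prop :=
  ∃ a b : ℝ, S = (fun x : ℝ => (x : Real.Angle)) '' Set.Icc a b

/-- The conflict set of two labels, as a subset of the circle `ℝ/2πℤ`: the set of
rotation angles at which the two rotated labels intersect. -/
noncomputable def conflictSet (p p' : ℝ × ℝ) (ℓ ℓ' : Set (ℝ × ℝ)) : Set Real.Angle :=
  {θ | ∃ α : ℝ, (α : Real.Angle) = θ ∧ (rotAbout p α ℓ ∩ rotAbout p' α ℓ').Nonempty}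

lemma rot_neg_rot (α : ℝ) (v : ℝ × ℝ) : rot (-α) (rot α v) = v := by
  obtain ⟨x, y⟩ := v
  simp only [rot, Real.cos_neg, Real.sin_neg, Prod.mk.injEq]
  constructor
  · linear_combination x * Real.sin_sq_add_cos_sq α
  · linear_combination y * Real.sin_sq_add_cos_sq α

lemma rot_rot_neg (α : ℝ) (v : ℝ × ℝ) : rot α (rot (-α) v) = v := by
  have := rot_neg_rot (-α) v
  simpa using this

lemma rot_sub (α : ℝ) (u v : ℝ × ℝ) : rot α (u - v) = rot α u - rot α v := by
  simp only [rot, Prod.mk_sub_mk, Prod.fst_sub, Prod.snd_sub, Prod.mk.injEq]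
  constructor <;> ring

/-- one-dimensional interval decomposition -/
lemma exists_sub_eq {wl wr wl' wr' d : ℝ} (hwl : 0 ≤ wl) (hwr : 0 ≤ wr)
    (hwl' : 0 ≤ wl') (hwr' : 0 ≤ wr') (h1 : -(wl + wr') ≤ d) (h2 : d ≤ wr + wl') :
    ∃ u v : ℝ, -wl ≤ u ∧ u ≤ wr ∧ -wl' ≤ v ∧ v ≤ wr' ∧ u - v = d := by
  refine ⟨max (-wl) (min wr d), max (-wl) (min wr d) - d, le_max_left _ _, ?_, ?_, ?_, by ring⟩
  · exact max_le (by linarith) (min_le_left _ _)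
  · have : d - wl' ≤ min wr d := le_min (by linarith) (by linarith)
    have := this.trans (le_max_right (-wl) (min wr d))
    linarith
  · have h3 : min wr d ≤ d := min_le_right _ _
    have h4 : max (-wl) (min wr d) ≤ wr' + d := max_le (by linarith) (by linarith)
    linarith

/-- The two rotated rectangles intersect iff the derotated anchor difference lies in a rectangle. -/
lemma conflict_iff (p p' : ℝ × ℝ) (wl wr hb ht wl' wr' hb' ht' : ℝ)
    (hwl : 0 ≤ wl) (hwr : 0 ≤ wr) (hhb : 0 ≤ hb) (hht : 0 ≤ ht)
    (hwl' : 0 ≤ wl') (hwr' : 0 ≤ wr') (hhb' : 0 ≤ hb') (hht' : 0 ≤ ht') (α : ℝ) :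
    (rotAbout p α (rectLabel p wl wr hb ht) ∩
      rotAbout p' α (rectLabel p' wl' wr' hb' ht')).Nonempty ↔
    (-(wl + wr') ≤ (rot (-α) (p' - p)).1 ∧ (rot (-α) (p' - p)).1 ≤ wr + wl' ∧
     -(hb + ht') ≤ (rot (-α) (p' - p)).2 ∧ (rot (-α) (p' - p)).2 ≤ ht + hb') := by
  constructor
  · rintro ⟨z, ⟨x, hx, hxz⟩, ⟨y, hy, hyz⟩⟩
    have h : rot α (x - p) - rot α (y - p') = p' - p := by
      rw [sub_eq_sub_iff_add_eq_add, add_comm]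
      exact hxz.trans hyz.symm
    have hd : rot (-α) (p' - p) = (x - p) - (y - p') := by
      rw [← h, ← rot_sub, rot_neg_rot]
    simp only [rectLabel, Set.mem_Icc, Prod.le_def] at hx hy
    rw [hd]
    simp only [Prod.fst_sub, Prod.snd_sub]
    refine ⟨by linarith [hx.1.1, hy.2.1], by linarith [hx.2.1, hy.1.1],
      by linarith [hx.1.2, hy.2.2], by linarith [hx.2.2, hy.1.2]⟩
  · rintro ⟨h1, h2, h3, h4⟩
    obtain ⟨u1, v1, hu1, hu1', hv1, hv1', huv1⟩ :=
      exists_sub_eq hwl hwr hwl' hwr' h1 h2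
    obtain ⟨u2, v2, hu2, hu2', hv2, hv2', huv2⟩ :=
      exists_sub_eq hhb hht hhb' hht' h3 h4
    refine ⟨p + rot α (u1, u2), ⟨p + (u1, u2), ?_, by simp⟩, ⟨p' + (v1, v2), ?_, ?_⟩⟩
    · simp only [rectLabel, Set.mem_Icc, Prod.le_def]
      constructor <;> constructor <;> simp <;> linarith
    · simp only [rectLabel, Set.mem_Icc, Prod.le_def]
      constructor <;> constructor <;> simp <;> linarith
    · have huv : (u1, u2) - (v1, v2) = rot (-α) (p' - p) := by
        simp only [Prod.mk_sub_mk, huv1, huv2]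
      have : rot α ((u1, u2) - (v1, v2)) = p' - p := by
        rw [huv, rot_rot_neg]
      rw [rot_sub] at this
      simp only [add_sub_cancel_left]
      have h5 : p' + rot α (v1, v2) = p + rot α (u1, u2) := by
        rw [sub_eq_sub_iff_add_eq_add] at this
        linear_combination -this
      exact h5

/-- "monotone or antitone" on a set -/
def MA (f : ℝ → ℝ) (s : Set ℝ) : Prop := MonotoneOn f s ∨ AntitoneOn f s

lemma MA.subset {f : ℝ → ℝ} {s t : Set ℝ} (h : MA f s) (hts : t ⊆ s) : MA f t := by
  rcases h with h | h
  · exact Or.inl (h.mono hts)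
  · exact Or.inr (h.mono hts)

lemma MA.neg {f : ℝ → ℝ} {s : Set ℝ} (h : MA f s) : MA (fun x => -(f x)) s := by
  rcases h with h | h
  · exact Or.inr (fun a ha b hb hab => neg_le_neg (h ha hb hab))
  · exact Or.inl (fun a ha b hb hab => neg_le_neg (h ha hb hab))

lemma MA.const_mul {f : ℝ → ℝ} {s : Set ℝ} {r : ℝ} (hr : 0 ≤ r) (h : MA f s) :
    MA (fun x => r * f x) s := by
  rcases h with h | h
  · exact Or.inl (fun a ha b hb hab => mul_le_mul_of_nonneg_left (h ha hb hab) hr)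
  · exact Or.inr (fun a ha b hb hab => mul_le_mul_of_nonneg_left (h ha hb hab) hr)

lemma MA.shift {f : ℝ → ℝ} {a b : ℝ} (h : MA f (Icc a b)) (φ : ℝ) :
    MA (fun x => f (x - φ)) (Icc (a + φ) (b + φ)) := by
  rcases h with h | h
  · exact Or.inl (fun x hx y hy hxy =>
      h ⟨by linarith [hx.1], by linarith [hx.2]⟩ ⟨by linarith [hy.1], by linarith [hy.2]⟩
        (by linarith))
  · exact Or.inr (fun x hx y hy hxy =>
      h ⟨by linarith [hx.1], by linarith [hx.2]⟩ ⟨by linarith [hy.1], by linarith [hy.2]⟩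
        (by linarith))

lemma MA.between {f : ℝ → ℝ} {Q : Set ℝ} (hf : MA f Q) {x1 x2 x lo hi : ℝ}
    (h1 : x1 ∈ Q) (h2 : x2 ∈ Q) (hx : x ∈ Q) (h1x : x1 ≤ x) (hx2 : x ≤ x2)
    (ha1 : lo ≤ f x1) (ha2 : lo ≤ f x2) (hb1 : f x1 ≤ hi) (hb2 : f x2 ≤ hi) :
    lo ≤ f x ∧ f x ≤ hi := by
  rcases hf with hf | hf
  · exact ⟨ha1.trans (hf h1 hx h1x), (hf hx h2 hx2).trans hb2⟩
  · exact ⟨ha2.trans (hf hx h2 hx2), (hf h1 hx h1x).trans hb1⟩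

lemma ma_cos0 : MA Real.cos (Icc 0 (π/2)) :=
  Or.inr ((Real.strictAntiOn_cos.antitoneOn).mono (Icc_subset_Icc le_rfl (by linarith [Real.pi_pos])))
lemma ma_cos1 : MA Real.cos (Icc (π/2) π) :=
  Or.inr ((Real.strictAntiOn_cos.antitoneOn).mono (Icc_subset_Icc (by linarith [Real.pi_pos]) le_rfl))
lemma ma_cos2 : MA Real.cos (Icc π (3*π/2)) := by
  refine Or.inl (fun x hx y hy hxy => ?_)
  have hx' : x - π ∈ Icc 0 π := ⟨by linarith [hx.1], by linarith [hx.2, Real.pi_pos]⟩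
  have hy' : y - π ∈ Icc 0 π := ⟨by linarith [hy.1], by linarith [hy.2, Real.pi_pos]⟩
  have := Real.strictAntiOn_cos.antitoneOn hx' hy' (by linarith)
  have e1 : Real.cos (x - π) = -Real.cos x := by
    rw [Real.cos_sub_pi]
  have e2 : Real.cos (y - π) = -Real.cos y := by
    rw [Real.cos_sub_pi]
  rw [e1, e2] at this
  linarith
lemma ma_cos3 : MA Real.cos (Icc (3*π/2) (2*π)) := by
  refine Or.inl (fun x hx y hy hxy => ?_)
  have hx' : x - π ∈ Icc 0 π := ⟨by linarith [hx.1, Real.pi_pos], by linarith [hx.2]⟩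
  have hy' : y - π ∈ Icc 0 π := ⟨by linarith [hy.1, Real.pi_pos], by linarith [hy.2]⟩
  have := Real.strictAntiOn_cos.antitoneOn hx' hy' (by linarith)
  rw [Real.cos_sub_pi, Real.cos_sub_pi] at this
  linarith
lemma ma_sin0 : MA Real.sin (Icc 0 (π/2)) :=
  Or.inl ((Real.strictMonoOn_sin.monotoneOn).mono
    (Icc_subset_Icc (by linarith [Real.pi_pos]) le_rfl))
lemma sin_anti : AntitoneOn Real.sin (Icc (π/2) (3*π/2)) := by
  intro x hx y hy hxy
  have hx' : x - π/2 ∈ Icc 0 π := ⟨by linarith [hx.1], by linarith [hx.2]⟩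
  have hy' : y - π/2 ∈ Icc 0 π := ⟨by linarith [hy.1], by linarith [hy.2]⟩
  have := Real.strictAntiOn_cos.antitoneOn hx' hy' (by linarith)
  rwa [Real.cos_sub_pi_div_two, Real.cos_sub_pi_div_two] at this
lemma ma_sin1 : MA Real.sin (Icc (π/2) π) :=
  Or.inr (sin_anti.mono (Icc_subset_Icc le_rfl (by linarith [Real.pi_pos])))
lemma ma_sin2 : MA Real.sin (Icc π (3*π/2)) :=
  Or.inr (sin_anti.mono (Icc_subset_Icc (by linarith [Real.pi_pos]) le_rfl))
lemma ma_sin3 : MA Real.sin (Icc (3*π/2) (2*π)) := by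
  refine Or.inl (fun x hx y hy hxy => ?_)
  have hx' : x - 2*π ∈ Icc (-(π/2)) (π/2) :=
    ⟨by linarith [hx.1], by linarith [hx.2, Real.pi_pos]⟩
  have hy' : y - 2*π ∈ Icc (-(π/2)) (π/2) :=
    ⟨by linarith [hy.1], by linarith [hy.2, Real.pi_pos]⟩
  have := Real.strictMonoOn_sin.monotoneOn hx' hy' (by linarith)
  have e : ∀ z : ℝ, Real.sin (z - 2*π) = Real.sin z := by
    intro z
    have := Real.sin_periodic.sub_eq z
    simpa using Real.sin_periodic.sub_eq z
  rwa [e, e] at this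

/-- A closed, "order convex within Icc" slice of an Icc is an Icc. -/
lemma exists_Icc_eq (e f : ℝ) (S : Set ℝ) (hS : IsClosed S)
    (hconv : ∀ ⦃x1 x2 x : ℝ⦄, x1 ∈ Icc e f ∩ S → x2 ∈ Icc e f ∩ S →
      x1 ≤ x → x ≤ x2 → x ∈ S) :
    ∃ a b : ℝ, Icc e f ∩ S = Icc a b := by
  rcases (Icc e f ∩ S).eq_empty_or_nonempty with h | h
  · exact ⟨1, 0, by simp [h, Set.Icc_eq_empty_of_lt (by norm_num : (0:ℝ) < 1)]⟩
  · have hc : IsCompact (Icc e f ∩ S) := isCompact_Icc.inter_right hS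
    obtain ⟨a, ha⟩ := hc.exists_isLeast h
    obtain ⟨b, hb⟩ := hc.exists_isGreatest h
    refine ⟨a, b, Set.Subset.antisymm (fun x hx => ⟨ha.2 hx, hb.2 hx⟩) (fun x hx => ?_)⟩
    have hxQ : x ∈ Icc e f := ⟨ha.1.1.1.trans hx.1, hx.2.trans hb.1.1.2⟩
    exact ⟨hxQ, hconv ha.1 hb.1 hx.1 hx.2⟩

lemma quadrant_Icc (q : ℝ × ℝ) (r φ lo1 hi1 lo2 hi2 a b : ℝ) (hr : 0 ≤ r)
    (hq1 : q.1 = r * Real.cos φ) (hq2 : q.2 = r * Real.sin φ)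
    (hc : MA Real.cos (Icc a b)) (hs : MA Real.sin (Icc a b)) :
    ∃ u v : ℝ, Icc (a + φ) (b + φ) ∩
      {α : ℝ | lo1 ≤ (rot (-α) q).1 ∧ (rot (-α) q).1 ≤ hi1 ∧
               lo2 ≤ (rot (-α) q).2 ∧ (rot (-α) q).2 ≤ hi2} = Icc u v := by
  have hg : ∀ α : ℝ, (rot (-α) q).1 = r * Real.cos (α - φ) := by
    intro α
    simp only [rot, Real.cos_neg, Real.sin_neg]
    rw [hq1, hq2, Real.cos_sub]; ring
  have hh : ∀ α : ℝ, (rot (-α) q).2 = r * (-(Real.sin (α - φ))) := by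
    intro α
    simp only [rot, Real.cos_neg, Real.sin_neg]
    rw [hq1, hq2, Real.sin_sub]; ring
  have MAg : MA (fun α => r * Real.cos (α - φ)) (Icc (a + φ) (b + φ)) :=
    MA.const_mul hr (hc.shift φ)
  have MAh : MA (fun α => r * (-(Real.sin (α - φ)))) (Icc (a + φ) (b + φ)) :=
    MA.const_mul hr ((hs.shift φ).neg)
  have hcont1 : Continuous fun α : ℝ => (rot (-α) q).1 := by
    simp only [rot, Real.cos_neg, Real.sin_neg]; fun_prop
  have hcont2 : Continuous fun α : ℝ => (rot (-α) q).2 := by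
    simp only [rot, Real.cos_neg, Real.sin_neg]; fun_prop
  have hS : IsClosed {α : ℝ | lo1 ≤ (rot (-α) q).1 ∧ (rot (-α) q).1 ≤ hi1 ∧
               lo2 ≤ (rot (-α) q).2 ∧ (rot (-α) q).2 ≤ hi2} := by
    have : {α : ℝ | lo1 ≤ (rot (-α) q).1 ∧ (rot (-α) q).1 ≤ hi1 ∧
               lo2 ≤ (rot (-α) q).2 ∧ (rot (-α) q).2 ≤ hi2} =
        ((fun α : ℝ => (rot (-α) q).1) ⁻¹' Icc lo1 hi1) ∩
        ((fun α : ℝ => (rot (-α) q).2) ⁻¹' Icc lo2 hi2) := by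
      ext α
      simp only [mem_inter_iff, mem_preimage, mem_Icc, mem_setOf_eq]
      tauto
    rw [this]
    exact (isClosed_Icc.preimage hcont1).inter (isClosed_Icc.preimage hcont2)
  apply exists_Icc_eq _ _ _ hS
  intro x1 x2 x h1 h2 hle1 hle2
  have hxQ : x ∈ Icc (a + φ) (b + φ) := ⟨h1.1.1.trans hle1, hle2.trans h2.1.2⟩
  have m1 := h1.2
  have m2 := h2.2
  simp only [mem_setOf_eq, hg, hh] at m1 m2 ⊢
  have B1 := MAg.between h1.1 h2.1 hxQ hle1 hle2 m1.1 m2.1 m1.2.1 m2.2.1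
  have B2 := MAh.between h1.1 h2.1 hxQ hle1 hle2 m1.2.2.1 m2.2.2.1 m1.2.2.2 m2.2.2.2
  exact ⟨B1.1, B1.2, B2.1, B2.2⟩

/-- For any two labels `ℓ` and `ℓ'` with anchor points `p ∈ ℓ`, `p' ∈ ℓ'`, the conflict set
`C(ℓ,ℓ')` is the union of at most four closed circular arcs. -/
theorem conflictSet_union_four_arcs
    (p p' : ℝ × ℝ) (hpp' : p ≠ p')
    (wl wr hb ht wl' wr' hb' ht' : ℝ)
    (hwl : 0 ≤ wl) (hwr : 0 ≤ wr) (hhb : 0 ≤ hb) (hht : 0 ≤ ht)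
    (hwl' : 0 ≤ wl') (hwr' : 0 ≤ wr') (hhb' : 0 ≤ hb') (hht' : 0 ≤ ht')
    (hw : 0 < wl + wr) (hh : 0 < hb + ht) (hw' : 0 < wl' + wr') (hh' : 0 < hb' + ht') :
    ∃ A₁ A₂ A₃ A₄ : Set Real.Angle,
      IsClosedArc A₁ ∧ IsClosedArc A₂ ∧ IsClosedArc A₃ ∧ IsClosedArc A₄ ∧
      conflictSet p p' (rectLabel p wl wr hb ht) (rectLabel p' wl' wr' hb' ht') =
        A₁ ∪ A₂ ∪ A₃ ∪ A₄ := by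
  set q : ℝ × ℝ := p' - p with hqdef
  set z : ℂ := ⟨q.1, q.2⟩ with hzdef
  set r : ℝ := ‖z‖ with hrdef
  set φ : ℝ := Complex.arg z with hφdef
  have hr : 0 ≤ r := norm_nonneg z
  have hq1 : q.1 = r * Real.cos φ := (Complex.norm_mul_cos_arg z).symm
  have hq2 : q.2 = r * Real.sin φ := (Complex.norm_mul_sin_arg z).symm
  set S : Set ℝ := {α : ℝ | -(wl + wr') ≤ (rot (-α) q).1 ∧ (rot (-α) q).1 ≤ wr + wl' ∧
               -(hb + ht') ≤ (rot (-α) q).2 ∧ (rot (-α) q).2 ≤ ht + hb'} with hSdef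
  have hset : conflictSet p p' (rectLabel p wl wr hb ht) (rectLabel p' wl' wr' hb' ht') =
      (fun x : ℝ => (x : Real.Angle)) '' S := by
    ext θ
    simp only [conflictSet, mem_setOf_eq, Set.mem_image]
    constructor
    · rintro ⟨α, hα, hne⟩
      exact ⟨α, (conflict_iff p p' wl wr hb ht wl' wr' hb' ht'
        hwl hwr hhb hht hwl' hwr' hhb' hht' α).mp hne, hα⟩
    · rintro ⟨α, hαS, hα⟩
      exact ⟨α, hα, (conflict_iff p p' wl wr hb ht wl' wr' hb' ht'
        hwl hwr hhb hht hwl' hwr' hhb' hht' α).mpr hαS⟩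
  obtain ⟨u0, v0, h0⟩ := quadrant_Icc q r φ (-(wl + wr')) (wr + wl') (-(hb + ht')) (ht + hb')
    0 (π/2) hr hq1 hq2 ma_cos0 ma_sin0
  obtain ⟨u1, v1, h1⟩ := quadrant_Icc q r φ (-(wl + wr')) (wr + wl') (-(hb + ht')) (ht + hb')
    (π/2) π hr hq1 hq2 ma_cos1 ma_sin1
  obtain ⟨u2, v2, h2⟩ := quadrant_Icc q r φ (-(wl + wr')) (wr + wl') (-(hb + ht')) (ht + hb')
    π (3*π/2) hr hq1 hq2 ma_cos2 ma_sin2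
  obtain ⟨u3, v3, h3⟩ := quadrant_Icc q r φ (-(wl + wr')) (wr + wl') (-(hb + ht')) (ht + hb')
    (3*π/2) (2*π) hr hq1 hq2 ma_cos3 ma_sin3
  refine ⟨(fun x : ℝ => (x : Real.Angle)) '' Icc u0 v0,
          (fun x : ℝ => (x : Real.Angle)) '' Icc u1 v1,
          (fun x : ℝ => (x : Real.Angle)) '' Icc u2 v2,
          (fun x : ℝ => (x : Real.Angle)) '' Icc u3 v3,
          ⟨u0, v0, rfl⟩, ⟨u1, v1, rfl⟩, ⟨u2, v2, rfl⟩, ⟨u3, v3, rfl⟩, ?_⟩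
  rw [hset, ← h0, ← h1, ← h2, ← h3]
  apply Set.Subset.antisymm
  · rintro θ ⟨α, hαS, rfl⟩
    set β : ℝ := toIcoMod Real.two_pi_pos φ α with hβdef
    have hβmem : β ∈ Ico φ (φ + 2*π) := toIcoMod_mem_Ico Real.two_pi_pos φ α
    have hβeq : β = α - toIcoDiv Real.two_pi_pos φ α • (2*π) := rfl
    have hβang : (β : Real.Angle) = (α : Real.Angle) := by
      rw [Real.Angle.angle_eq_iff_two_pi_dvd_sub]
      refine ⟨-(toIcoDiv Real.two_pi_pos φ α), ?_⟩
      rw [hβeq]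
      push_cast [zsmul_eq_mul]
      ring
    have hcos : Real.cos β = Real.cos α := by
      rw [hβeq]; exact Real.cos_periodic.sub_zsmul_eq _
    have hsin : Real.sin β = Real.sin α := by
      rw [hβeq]; exact Real.sin_periodic.sub_zsmul_eq _
    have hβS : β ∈ S := by
      have hrot : rot (-β) q = rot (-α) q := by
        simp only [rot, Real.cos_neg, Real.sin_neg, hcos, hsin]
      simp only [hSdef, mem_setOf_eq, hrot]
      exact hαS
    rcases le_total β (π/2 + φ) with hc1 | hc1
    · exact Or.inl (Or.inl (Or.inl ⟨β, ⟨⟨by linarith [hβmem.1], hc1⟩, hβS⟩, hβang⟩))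
    · rcases le_total β (π + φ) with hc2 | hc2
      · exact Or.inl (Or.inl (Or.inr ⟨β, ⟨⟨hc1, hc2⟩, hβS⟩, hβang⟩))
      · rcases le_total β (3*π/2 + φ) with hc3 | hc3
        · exact Or.inl (Or.inr ⟨β, ⟨⟨hc2, hc3⟩, hβS⟩, hβang⟩)
        · exact Or.inr ⟨β, ⟨⟨hc3, by linarith [hβmem.2]⟩, hβS⟩, hβang⟩
  · refine union_subset (union_subset (union_subset ?_ ?_) ?_) ?_ <;>
      exact image_mono inter_subset_right
end

section
/- Let ℓ and ℓ' be labels with anchors p and p' = p + (d,0), d > 0. If at an angle α the rotated labels ℓ(α) and ℓ'(α) intersect but their interiors are disjoint (a conflict event), then α, taken modulo 2π, belongs to the set 𝒞 = {2π − arcsin((h_t+h'_b)/d), π + arcsin((h_t+h'_b)/d), arcsin((h_b+h'_t)/d), π − arcsin((h_b+h'_t)/d), 2π − arccos((w_r+w'_l)/d), arccos((w_r+w'_l)/d), π − arccos((w_l+w'_r)/d), π + arccos((w_l+w'_r)/d)}. -/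
open Real Set

lemma continuous_rot (α : ℝ) : Continuous (rot α) := by
  unfold rot; fun_prop

noncomputable def rotHomeo (p : ℝ × ℝ) (α : ℝ) : (ℝ × ℝ) ≃ₜ (ℝ × ℝ) where
  toFun x := p + rot α (x - p)
  invFun x := p + rot (-α) (x - p)
  left_inv x := by simp [rot_neg_rot]
  right_inv x := by
    have := rot_neg_rot (-α) (x - p)
    rw [neg_neg] at this
    simp [this]
  continuous_toFun := by
    exact continuous_const.add ((continuous_rot α).comp (continuous_id.sub continuous_const))
  continuous_invFun := by
    exact continuous_const.add ((continuous_rot (-α)).comp (continuous_id.sub continuous_const))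

lemma rotAbout_eq_homeo (p : ℝ × ℝ) (α : ℝ) (s : Set (ℝ × ℝ)) :
    rotAbout p α s = (rotHomeo p α) '' s := rfl

lemma interior_rotAbout (p : ℝ × ℝ) (α : ℝ) (s : Set (ℝ × ℝ)) :
    interior (rotAbout p α s) = rotAbout p α (interior s) := by
  rw [rotAbout_eq_homeo, rotAbout_eq_homeo, (rotHomeo p α).image_interior]

lemma interior_rectLabel (p : ℝ × ℝ) (wl wr hb ht : ℝ) :
    interior (rectLabel p wl wr hb ht) =
      Set.Ioo (p.1 - wl) (p.1 + wr) ×ˢ Set.Ioo (p.2 - hb) (p.2 + ht) := by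
  rw [rectLabel, Set.Icc_prod_eq, interior_prod_eq, interior_Icc, interior_Icc]

lemma angle_cos_pos {c α : ℝ} (h : Real.cos α = c) (hc : 0 ≤ c) :
    (α : Real.Angle) = ↑(Real.arccos c) ∨ (α : Real.Angle) = ↑(2*π - Real.arccos c) := by
  have h1 : Real.cos α = Real.cos (Real.arccos c) := by
    rw [Real.cos_arccos (by linarith) (h ▸ Real.cos_le_one α)]; exact h
  rcases Real.Angle.cos_eq_iff_coe_eq_or_eq_neg.mp h1 with h2 | h2
  · exact Or.inl h2
  · right
    rw [h2, show (2*π - Real.arccos c : ℝ) = 2*π + -(Real.arccos c) by ring,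
      Real.Angle.coe_add, Real.Angle.coe_two_pi, zero_add, Real.Angle.coe_neg]

lemma angle_cos_neg {c α : ℝ} (h : Real.cos α = -c) (hc : 0 ≤ c) :
    (α : Real.Angle) = ↑(π - Real.arccos c) ∨ (α : Real.Angle) = ↑(π + Real.arccos c) := by
  have hc1 : c ≤ 1 := by nlinarith [Real.neg_one_le_cos α]
  have h1 : Real.cos α = Real.cos (π - Real.arccos c) := by
    rw [Real.cos_pi_sub, Real.cos_arccos (by linarith) hc1, h]
  rcases Real.Angle.cos_eq_iff_coe_eq_or_eq_neg.mp h1 with h2 | h2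
  · exact Or.inl h2
  · right
    rw [h2, show (π + Real.arccos c : ℝ) = 2*π + -(π - Real.arccos c) by ring,
      Real.Angle.coe_add, Real.Angle.coe_two_pi, zero_add, Real.Angle.coe_neg]

lemma angle_sin_pos {s α : ℝ} (h : Real.sin α = s) :
    (α : Real.Angle) = ↑(Real.arcsin s) ∨ (α : Real.Angle) = ↑(π - Real.arcsin s) := by
  have h1 : Real.sin α = Real.sin (Real.arcsin s) := by
    rw [Real.sin_arcsin (h ▸ Real.neg_one_le_sin α) (h ▸ Real.sin_le_one α)]; exact h
  rcases Real.Angle.sin_eq_iff_coe_eq_or_add_eq_pi.mp h1 with h2 | h2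
  · exact Or.inl h2
  · right
    rw [Real.Angle.coe_sub]
    exact eq_sub_of_add_eq h2

lemma angle_sin_neg {s α : ℝ} (h : Real.sin α = -s) :
    (α : Real.Angle) = ↑(2*π - Real.arcsin s) ∨ (α : Real.Angle) = ↑(π + Real.arcsin s) := by
  have hs1 : -1 ≤ s := by nlinarith [Real.sin_le_one α]
  have hs2 : s ≤ 1 := by nlinarith [Real.neg_one_le_sin α]
  have h1 : Real.sin α = Real.sin (-Real.arcsin s) := by
    rw [Real.sin_neg, Real.sin_arcsin hs1 hs2, h]
  rcases Real.Angle.sin_eq_iff_coe_eq_or_add_eq_pi.mp h1 with h2 | h2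
  · left
    rw [h2, show (2*π - Real.arcsin s : ℝ) = 2*π + -(Real.arcsin s) by ring,
      Real.Angle.coe_add, Real.Angle.coe_two_pi, zero_add, Real.Angle.coe_neg]
  · right
    rw [Real.Angle.coe_neg] at h2
    rw [Real.Angle.coe_add]
    have h3 : (α : Real.Angle) - ↑(Real.arcsin s) = ↑π := by
      rw [sub_eq_add_neg]; exact h2
    exact eq_add_of_sub_eq h3

/-- If at angle `α` the two rotated labels intersect but their interiors are disjoint
(a conflict event), then `α` modulo `2π` belongs to the eight-element set `𝒞`. -/
theorem conflict_event_mem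
    (p : ℝ × ℝ) (d : ℝ) (hd : 0 < d)
    (wl wr hb ht wl' wr' hb' ht' : ℝ)
    (hwl : 0 ≤ wl) (hwr : 0 ≤ wr) (hhb : 0 ≤ hb) (hht : 0 ≤ ht)
    (hwl' : 0 ≤ wl') (hwr' : 0 ≤ wr') (hhb' : 0 ≤ hb') (hht' : 0 ≤ ht')
    (hw : 0 < wl + wr) (hh : 0 < hb + ht) (hw' : 0 < wl' + wr') (hh' : 0 < hb' + ht')
    (α : ℝ)
    (hmeet : (rotAbout p α (rectLabel p wl wr hb ht) ∩
        rotAbout (p + (d, 0)) α (rectLabel (p + (d, 0)) wl' wr' hb' ht')).Nonempty)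
    (hint : interior (rotAbout p α (rectLabel p wl wr hb ht)) ∩
        interior (rotAbout (p + (d, 0)) α (rectLabel (p + (d, 0)) wl' wr' hb' ht')) = ∅) :
    (α : Real.Angle) ∈ (fun x : ℝ => (x : Real.Angle)) ''
      ({2 * π - Real.arcsin ((ht + hb') / d), π + Real.arcsin ((ht + hb') / d),
        Real.arcsin ((hb + ht') / d), π - Real.arcsin ((hb + ht') / d),
        2 * π - Real.arccos ((wr + wl') / d), Real.arccos ((wr + wl') / d),
        π - Real.arccos ((wl + wr') / d), π + Real.arccos ((wl + wr') / d)} : Set ℝ) := by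
  set p' : ℝ × ℝ := p + (d, 0) with hp'
  obtain ⟨q, hq1, hq2⟩ := hmeet
  obtain ⟨x, hx, hxq⟩ := hq1
  obtain ⟨x', hx', hxq'⟩ := hq2
  set v : ℝ × ℝ := (d * Real.cos α, -(d * Real.sin α)) with hv
  have hpyth := Real.sin_sq_add_cos_sq α
  have hrotv : rot α v = (d, 0) := by
    simp only [rot, hv]
    ext
    · simp; linear_combination d * hpyth
    · simp; ring
  have key : (x - p) - (x' - p') = v := by
    have heq : p + rot α (x - p) = p' + rot α (x' - p') := hxq.trans hxq'.symm
    have h1 : rot α ((x - p) - (x' - p')) = rot α v := by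
      rw [rot_sub, hrotv]
      have h2 : rot α (x - p) - rot α (x' - p') = p' - p := by
        linear_combination heq
      rw [h2, hp']; abel
    have h3 := congrArg (rot (-α)) h1
    rwa [rot_neg_rot, rot_neg_rot] at h3
  -- coordinates
  have hp'1 : p'.1 = p.1 + d := by simp [hp']
  have hp'2 : p'.2 = p.2 := by simp [hp']
  rw [rectLabel, Set.mem_Icc, Prod.le_def, Prod.le_def] at hx hx'
  obtain ⟨⟨hx1a, hx2a⟩, ⟨hx1b, hx2b⟩⟩ := hx
  obtain ⟨⟨hx1a', hx2a'⟩, ⟨hx1b', hx2b'⟩⟩ := hx'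
  dsimp only at hx1a hx2a hx1b hx2b hx1a' hx2a' hx1b' hx2b'
  have key1 : (x.1 - p.1) - (x'.1 - p'.1) = d * Real.cos α := by
    have := congrArg Prod.fst key; simpa using this
  have key2 : (x.2 - p.2) - (x'.2 - p'.2) = -(d * Real.sin α) := by
    have := congrArg Prod.snd key; simpa using this
  -- nonstrict bounds
  have hA : d * Real.cos α ≤ wr + wl' := by rw [← key1]; linarith [hp'1]
  have hB : -(wl + wr') ≤ d * Real.cos α := by rw [← key1]; linarith [hp'1]
  have hC : -(d * Real.sin α) ≤ ht + hb' := by rw [← key2]; linarith [hp'2]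
  have hD : -(hb + ht') ≤ -(d * Real.sin α) := by rw [← key2]; linarith [hp'2]
  -- one of the boundary equalities must hold
  have hcase : d * Real.cos α = wr + wl' ∨ d * Real.cos α = -(wl + wr') ∨
      -(d * Real.sin α) = ht + hb' ∨ -(d * Real.sin α) = -(hb + ht') := by
    by_contra hcon
    push_neg at hcon
    obtain ⟨h1, h2, h3, h4⟩ := hcon
    have s1 : d * Real.cos α < wr + wl' := lt_of_le_of_ne hA h1
    have s2 : -(wl + wr') < d * Real.cos α := lt_of_le_of_ne hB (Ne.symm h2)
    have s3 : -(d * Real.sin α) < ht + hb' := lt_of_le_of_ne hC h3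
    have s4 : -(hb + ht') < -(d * Real.sin α) := lt_of_le_of_ne hD (Ne.symm h4)
    set v1 : ℝ := d * Real.cos α
    set v2 : ℝ := -(d * Real.sin α)
    set m1 : ℝ := (max (-wl) (v1 - wl') + min wr (v1 + wr')) / 2 with hm1
    set m2 : ℝ := (max (-hb) (v2 - hb') + min ht (v2 + ht')) / 2 with hm2
    have hab1 : max (-wl) (v1 - wl') < min wr (v1 + wr') :=
      max_lt (lt_min (by linarith) (by linarith)) (lt_min (by linarith) (by linarith))
    have hab2 : max (-hb) (v2 - hb') < min ht (v2 + ht') :=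
      max_lt (lt_min (by linarith) (by linarith)) (lt_min (by linarith) (by linarith))
    have hm1l := le_max_left (-wl) (v1 - wl')
    have hm1r := le_max_right (-wl) (v1 - wl')
    have hm1l' := min_le_left wr (v1 + wr')
    have hm1r' := min_le_right wr (v1 + wr')
    have hm2l := le_max_left (-hb) (v2 - hb')
    have hm2r := le_max_right (-hb) (v2 - hb')
    have hm2l' := min_le_left ht (v2 + ht')
    have hm2r' := min_le_right ht (v2 + ht')
    have hmid1a : max (-wl) (v1 - wl') < m1 := by rw [hm1]; linarith [hab1]
    have hmid1b : m1 < min wr (v1 + wr') := by rw [hm1]; linarith [hab1]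
    have hmid2a : max (-hb) (v2 - hb') < m2 := by rw [hm2]; linarith [hab2]
    have hmid2b : m2 < min ht (v2 + ht') := by rw [hm2]; linarith [hab2]
    have b1 : -wl < m1 := lt_of_le_of_lt hm1l hmid1a
    have b2 : m1 < wr := lt_of_lt_of_le hmid1b hm1l'
    have b3 : v1 - wl' < m1 := lt_of_le_of_lt hm1r hmid1a
    have b4 : m1 < v1 + wr' := lt_of_lt_of_le hmid1b hm1r'
    have b5 : -hb < m2 := lt_of_le_of_lt hm2l hmid2a
    have b6 : m2 < ht := lt_of_lt_of_le hmid2b hm2l'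
    have b7 : v2 - hb' < m2 := lt_of_le_of_lt hm2r hmid2a
    have b8 : m2 < v2 + ht' := lt_of_lt_of_le hmid2b hm2r'
    -- the common interior point
    set z : ℝ × ℝ := p + rot α ((m1, m2) : ℝ × ℝ) with hz
    have hz1 : z ∈ interior (rotAbout p α (rectLabel p wl wr hb ht)) := by
      rw [interior_rotAbout, interior_rectLabel]
      refine ⟨p + (m1, m2), ?_, ?_⟩
      · constructor <;> constructor <;> simp <;> linarith
      · show p + rot α ((p + (m1, m2)) - p) = z
        have harg0 : (p + (m1, m2)) - p = ((m1, m2) : ℝ × ℝ) := by abel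
        rw [harg0, hz]
    have hz2 : z ∈ interior (rotAbout p' α (rectLabel p' wl' wr' hb' ht')) := by
      rw [interior_rotAbout, interior_rectLabel]
      refine ⟨p' + (((m1, m2) : ℝ × ℝ) - v), ?_, ?_⟩
      · constructor <;> constructor <;>
          simp [hp'1, hp'2, hv] <;> linarith
      · show p' + rot α ((p' + (((m1, m2) : ℝ × ℝ) - v)) - p') = z
        have harg : (p' + (((m1, m2) : ℝ × ℝ) - v)) - p' = ((m1, m2) : ℝ × ℝ) - v := by abel
        rw [harg, rot_sub, hrotv, hz, hp']
        abel
    have : z ∈ (∅ : Set (ℝ × ℝ)) := hint ▸ ⟨hz1, hz2⟩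
    exact this
  -- conclude via trigonometry
  rcases hcase with hc | hc | hc | hc
  · have hcos : Real.cos α = (wr + wl') / d := by
      field_simp; linarith [hc]
    have hnn : 0 ≤ (wr + wl') / d := by positivity
    rcases angle_cos_pos hcos hnn with h | h
    · exact ⟨Real.arccos ((wr + wl') / d), by simp, h.symm⟩
    · exact ⟨2 * π - Real.arccos ((wr + wl') / d), by simp, h.symm⟩
  · have hcos : Real.cos α = -((wl + wr') / d) := by
      field_simp; linarith [hc]
    have hnn : 0 ≤ (wl + wr') / d := by positivity
    rcases angle_cos_neg hcos hnn with h | h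
    · exact ⟨π - Real.arccos ((wl + wr') / d), by simp, h.symm⟩
    · exact ⟨π + Real.arccos ((wl + wr') / d), by simp, h.symm⟩
  · have hsin : Real.sin α = -((ht + hb') / d) := by
      field_simp; linarith [hc]
    rcases angle_sin_neg hsin with h | h
    · exact ⟨2 * π - Real.arcsin ((ht + hb') / d), by simp, h.symm⟩
    · exact ⟨π + Real.arcsin ((ht + hb') / d), by simp, h.symm⟩
  · have hsin : Real.sin α = (hb + ht') / d := by
      field_simp; linarith [hc]
    rcases angle_sin_pos hsin with h | h
    · exact ⟨Real.arcsin ((hb + ht') / d), by simp, h.symm⟩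
    · exact ⟨π - Real.arcsin ((hb + ht') / d), by simp, h.symm⟩
end

section
/- Let ℓ and ℓ' be labels with anchors p and p' = p + (d,0), d > 0, and let t(α) denote the rotated top side of ℓ(α) and b'(α) the rotated bottom side of ℓ'(α) (closed segments). If t(α) ∩ b'(α) ≠ ∅, then d · sin α = −(h_t + h'_b); in particular d ≥ h_t + h'_b and α modulo 2π lies in {2π − arcsin((h_t+h'_b)/d), π + arcsin((h_t+h'_b)/d)}. -/
open Real Set

/-- The top side of the label anchored at `p` (at rotation 0). -/
noncomputable def topSide (p : ℝ × ℝ) (wl wr ht : ℝ) : Set (ℝ × ℝ) :=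
  Set.Icc (p.1 - wl, p.2 + ht) (p.1 + wr, p.2 + ht)

/-- The bottom side of the label anchored at `p` (at rotation 0). -/
noncomputable def botSide (p : ℝ × ℝ) (wl wr hb : ℝ) : Set (ℝ × ℝ) :=
  Set.Icc (p.1 - wl, p.2 - hb) (p.1 + wr, p.2 - hb)

/-- If the rotated top side `t(α)` of `ℓ` meets the rotated bottom side `b'(α)` of `ℓ'`
(anchors at distance `d` on a horizontal line), then `d·sin α = −(h_t + h'_b)`;
in particular `d ≥ h_t + h'_b` and `α` modulo `2π` lies in
`{2π − arcsin((h_t+h'_b)/d), π + arcsin((h_t+h'_b)/d)}`. -/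
theorem top_bottom_conflict_event
    (p : ℝ × ℝ) (d : ℝ) (hd : 0 < d)
    (wl wr hb ht wl' wr' hb' ht' : ℝ)
    (hwl : 0 ≤ wl) (hwr : 0 ≤ wr) (hhb : 0 ≤ hb) (hht : 0 ≤ ht)
    (hwl' : 0 ≤ wl') (hwr' : 0 ≤ wr') (hhb' : 0 ≤ hb') (hht' : 0 ≤ ht')
    (hw : 0 < wl + wr) (hh : 0 < hb + ht) (hw' : 0 < wl' + wr') (hh' : 0 < hb' + ht')
    (α : ℝ)
    (hmeet : (rotAbout p α (topSide p wl wr ht) ∩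
        rotAbout (p + (d, 0)) α (botSide (p + (d, 0)) wl' wr' hb')).Nonempty) :
    d * Real.sin α = -(ht + hb') ∧ ht + hb' ≤ d ∧
      ((α : Real.Angle) = ((2 * π - Real.arcsin ((ht + hb') / d) : ℝ) : Real.Angle) ∨
       (α : Real.Angle) = ((π + Real.arcsin ((ht + hb') / d) : ℝ) : Real.Angle)) := by
  obtain ⟨z, ⟨a, ha, hza⟩, ⟨b, hbm, hzb⟩⟩ := hmeet
  rw [topSide, Set.mem_Icc, Prod.le_def, Prod.le_def] at ha
  rw [botSide, Set.mem_Icc, Prod.le_def, Prod.le_def] at hbm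
  have ha2 : a.2 = p.2 + ht := le_antisymm ha.2.2 ha.1.2
  have hb2 : b.2 = (p + (d, 0)).2 - hb' := le_antisymm hbm.2.2 hbm.1.2
  have heq : p + rot α (a - p) = (p + (d, 0)) + rot α (b - (p + (d, 0))) := hza.trans hzb.symm
  rw [Prod.ext_iff] at heq
  simp only [rot, Prod.fst_add, Prod.snd_add, Prod.fst_sub, Prod.snd_sub] at heq
  obtain ⟨e1, e2⟩ := heq
  rw [ha2] at e1 e2
  rw [hb2] at e1 e2
  simp only [Prod.fst_add, Prod.snd_add] at e1 e2
  set c := Real.cos α with hc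
  set s := Real.sin α with hs
  have hpyth : s ^ 2 + c ^ 2 = 1 := Real.sin_sq_add_cos_sq α
  have key : d * s = -(ht + hb') := by linear_combination (-s) * e1 + c * e2 - (ht + hb') * hpyth
  have hle : ht + hb' ≤ d := by nlinarith [Real.neg_one_le_sin α]
  refine ⟨key, hle, ?_⟩
  have hdiv1 : (ht + hb') / d ≤ 1 := by
    rw [div_le_one hd]; exact hle
  have hdiv0 : (-1 : ℝ) ≤ (ht + hb') / d := by
    have h0 : (0 : ℝ) ≤ (ht + hb') / d := by positivity
    linarith
  have hsin : s = Real.sin (-(Real.arcsin ((ht + hb') / d))) := by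
    rw [Real.sin_neg, Real.sin_arcsin hdiv0 hdiv1]
    field_simp
    linarith [key]
  rw [hs] at hsin
  rcases Real.Angle.sin_eq_iff_coe_eq_or_add_eq_pi.mp hsin with h | h
  · left
    rw [h]
    have : ((2 * π - Real.arcsin ((ht + hb') / d) : ℝ) : Real.Angle)
        = ((2 * π : ℝ) : Real.Angle) - ((Real.arcsin ((ht + hb') / d) : ℝ) : Real.Angle) := by
      rw [← Real.Angle.coe_sub]
    rw [this, Real.Angle.coe_two_pi, zero_sub, Real.Angle.coe_neg]
  · right
    rw [Real.Angle.coe_neg] at h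
    have : (α : Real.Angle) = (π : Real.Angle) + (Real.arcsin ((ht + hb') / d) : ℝ) := by
      have := h
      abel_nf at this ⊢
      linear_combination (norm := abel_nf) this
    rw [this, ← Real.Angle.coe_add]
end

section
/- Let ℓ and ℓ' be labels with anchors p and p' = p + (d,0), d > 0, and let r(α) denote the rotated right side of ℓ(α) and l'(α) the rotated left side of ℓ'(α) (closed segments). If r(α) ∩ l'(α) ≠ ∅, then d · cos α = w_r + w'_l; in particular d ≥ w_r + w'_l and α modulo 2π lies in {arccos((w_r+w'_l)/d), 2π − arccos((w_r+w'_l)/d)}. -/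
open Real Set

/-- The right side of the label anchored at `p` (at rotation 0). -/
noncomputable def rightSide (p : ℝ × ℝ) (wr hb ht : ℝ) : Set (ℝ × ℝ) :=
  Set.Icc (p.1 + wr, p.2 - hb) (p.1 + wr, p.2 + ht)

/-- The left side of the label anchored at `p` (at rotation 0). -/
noncomputable def leftSide (p : ℝ × ℝ) (wl hb ht : ℝ) : Set (ℝ × ℝ) :=
  Set.Icc (p.1 - wl, p.2 - hb) (p.1 - wl, p.2 + ht)

/-- If the rotated right side `r(α)` of `ℓ` meets the rotated left side `l'(α)` of `ℓ'`
(anchors at distance `d` on a horizontal line), then `d·cos α = w_r + w'_l`;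
in particular `d ≥ w_r + w'_l` and `α` modulo `2π` lies in
`{arccos((w_r+w'_l)/d), 2π − arccos((w_r+w'_l)/d)}`. -/
theorem right_left_conflict_event
    (p : ℝ × ℝ) (d : ℝ) (hd : 0 < d)
    (wl wr hb ht wl' wr' hb' ht' : ℝ)
    (hwl : 0 ≤ wl) (hwr : 0 ≤ wr) (hhb : 0 ≤ hb) (hht : 0 ≤ ht)
    (hwl' : 0 ≤ wl') (hwr' : 0 ≤ wr') (hhb' : 0 ≤ hb') (hht' : 0 ≤ ht')
    (hw : 0 < wl + wr) (hh : 0 < hb + ht) (hw' : 0 < wl' + wr') (hh' : 0 < hb' + ht')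
    (α : ℝ)
    (hmeet : (rotAbout p α (rightSide p wr hb ht) ∩
        rotAbout (p + (d, 0)) α (leftSide (p + (d, 0)) wl' hb' ht')).Nonempty) :
    d * Real.cos α = wr + wl' ∧ wr + wl' ≤ d ∧
      ((α : Real.Angle) = ((Real.arccos ((wr + wl') / d) : ℝ) : Real.Angle) ∨
       (α : Real.Angle) = ((2 * π - Real.arccos ((wr + wl') / d) : ℝ) : Real.Angle)) := by

  obtain ⟨x, ⟨a, ha, hax⟩, ⟨b, hbmem, hbx⟩⟩ := hmeet
  rw [rightSide, Set.mem_Icc, Prod.le_def, Prod.le_def] at ha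
  rw [leftSide, Set.mem_Icc, Prod.le_def, Prod.le_def] at hbmem
  have ha1 : a.1 = p.1 + wr := le_antisymm ha.2.1 ha.1.1
  have hb1 : b.1 = (p + (d, 0)).1 - wl' := le_antisymm hbmem.2.1 hbmem.1.1
  have heq : p + rot α (a - p) = (p + (d, 0)) + rot α (b - (p + (d, 0))) :=
    hax.trans hbx.symm
  rw [Prod.ext_iff] at heq
  simp only [rot, Prod.fst_add, Prod.snd_add, Prod.fst_sub, Prod.snd_sub] at heq
  obtain ⟨h1, h2⟩ := heq
  rw [ha1, hb1] at h1 h2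
  simp only [Prod.fst_add, Prod.snd_add] at h1 h2
  have hpyth := Real.sin_sq_add_cos_sq α
  have key : d * Real.cos α = wr + wl' := by
    linear_combination (-Real.cos α) * h1 + (-Real.sin α) * h2 + (wr + wl') * hpyth
  have hle : wr + wl' ≤ d := key ▸ mul_le_of_le_one_right hd.le (Real.cos_le_one α)
  refine ⟨key, hle, ?_⟩
  · have hcos : Real.cos α = (wr + wl') / d := by field_simp; linarith [key]
    have h01 : 0 ≤ (wr + wl') / d := div_nonneg (by linarith) hd.le
    have h11 : (wr + wl') / d ≤ 1 := by rw [div_le_one hd]; exact hle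
    have hcc : Real.Angle.cos ((α : ℝ) : Real.Angle) =
        Real.Angle.cos ((Real.arccos ((wr + wl') / d) : ℝ) : Real.Angle) := by
      rw [Real.Angle.cos_coe, Real.Angle.cos_coe, hcos, Real.cos_arccos (by linarith) h11]
    rcases Real.Angle.cos_eq_iff_eq_or_eq_neg.mp hcc with h | h
    · exact Or.inl h
    · right
      rw [h, show ((2 * π - Real.arccos ((wr + wl') / d) : ℝ) : Real.Angle)
          = ((2 * π : ℝ) : Real.Angle) + ((-(Real.arccos ((wr + wl') / d)) : ℝ) : Real.Angle) by
        rw [← Real.Angle.coe_add]; ring_nf,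
        Real.Angle.coe_two_pi, zero_add, Real.Angle.coe_neg]
end

section
/- Let L be a finite family of pairwise disjoint closed axis-aligned unit squares in ℝ², each anchored at its lower-left corner. Then every label ℓ ∈ L is in conflict at some rotation angle with at most 56 other labels of L. -/
open Real Set

/-- The unit-square label anchored at its lower-left corner `p`, rotated by `α` about `p`:
`ℓ(α) = p + R_α([0,1]²)`. -/
noncomputable def unitSq (p : ℝ × ℝ) (α : ℝ) : Set (ℝ × ℝ) :=
  (fun v => p + rot α v) '' Set.Icc ((0, 0) : ℝ × ℝ) (1, 1)


lemma conflict_close {q p : ℝ × ℝ} {α : ℝ}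
    (h : (unitSq q α ∩ unitSq p α).Nonempty) :
    |q.1 - p.1| ≤ 2 ∧ |q.2 - p.2| ≤ 2 := by
  obtain ⟨x, ⟨v, hv, hxv⟩, ⟨w, hw, hxw⟩⟩ := h
  simp only [Set.mem_Icc, Prod.le_def] at hv hw
  obtain ⟨⟨hv1, hv2⟩, hv3, hv4⟩ := hv
  obtain ⟨⟨hw1, hw2⟩, hw3, hw4⟩ := hw
  have h := hxv.trans hxw.symm
  rw [Prod.ext_iff] at h
  simp only [rot, Prod.fst_add, Prod.snd_add] at h
  obtain ⟨h1, h2⟩ := h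
  have e1 : q.1 - p.1 = (w.1 - v.1) * Real.cos α - (w.2 - v.2) * Real.sin α := by
    linarith
  have e2 : q.2 - p.2 = (w.1 - v.1) * Real.sin α + (w.2 - v.2) * Real.cos α := by
    linarith
  have b1 : |w.1 - v.1| ≤ 1 := abs_le.2 ⟨by linarith, by linarith⟩
  have b2 : |w.2 - v.2| ≤ 1 := abs_le.2 ⟨by linarith, by linarith⟩
  have hc := Real.abs_cos_le_one α
  have hs := Real.abs_sin_le_one α
  constructor
  · calc |q.1 - p.1| = |(w.1 - v.1) * Real.cos α - (w.2 - v.2) * Real.sin α| := by rw [e1]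
      _ ≤ |(w.1 - v.1) * Real.cos α| + |(w.2 - v.2) * Real.sin α| := abs_sub _ _
      _ ≤ 1 * 1 + 1 * 1 := by rw [abs_mul, abs_mul]; gcongr
      _ = 2 := by norm_num
  · calc |q.2 - p.2| = |(w.1 - v.1) * Real.sin α + (w.2 - v.2) * Real.cos α| := by rw [e2]
      _ ≤ |(w.1 - v.1) * Real.sin α| + |(w.2 - v.2) * Real.cos α| := abs_add_le _ _
      _ ≤ 1 * 1 + 1 * 1 := by rw [abs_mul, abs_mul]; gcongr
      _ = 2 := by norm_num


/-- In a finite family of pairwise disjoint unit-square labels anchored at their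
lower-left corners, every label is in conflict (at some rotation angle) with at most
56 other labels of the family. -/
theorem conflicts_per_label_bound (L : Finset (ℝ × ℝ))
    (hdisj : ∀ p ∈ L, ∀ q ∈ L, p ≠ q →
      Set.Icc p (p + (1, 1)) ∩ Set.Icc q (q + (1, 1)) = ∅)
    (p : ℝ × ℝ) (hp : p ∈ L) :
    {q ∈ (L : Set (ℝ × ℝ)) | q ≠ p ∧
      ∃ α : ℝ, (unitSq q α ∩ unitSq p α).Nonempty}.ncard ≤ 56 := by
  classical
  set S := {q ∈ (L : Set (ℝ × ℝ)) | q ≠ p ∧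
      ∃ α : ℝ, (unitSq q α ∩ unitSq p α).Nonempty} with hS
  have hSsub : S ⊆ (L : Set (ℝ × ℝ)) := fun q hq => hq.1
  have hfin : S.Finite := L.finite_toSet.subset hSsub
  set F : Finset (ℝ × ℝ) := hfin.toFinset with hF
  -- each square of a conflicting label sits inside the big square
  have hbig : ∀ q ∈ F, Set.Icc q (q + (1, 1)) ⊆
      Set.Icc (p - (2, 2)) (p + (3, 3)) := by
    intro q hq
    rw [hF, Set.Finite.mem_toFinset] at hq
    obtain ⟨hqL, hqp, α, hconf⟩ := hq
    obtain ⟨c1, c2⟩ := conflict_close hconf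
    rw [abs_le] at c1 c2
    rintro y ⟨hy1, hy2⟩
    simp only [Prod.le_def, Prod.fst_add, Prod.snd_add, Prod.fst_sub, Prod.snd_sub,
      Prod.mk.injEq] at hy1 hy2
    simp only [Set.mem_Icc, Prod.le_def, Prod.fst_add, Prod.snd_add, Prod.fst_sub, Prod.snd_sub]
    norm_num
    refine ⟨⟨?_, ?_⟩, ?_, ?_⟩ <;> linarith [hy1.1, hy1.2, hy2.1, hy2.2, c1.1, c1.2, c2.1, c2.2]
  -- squares are pairwise disjoint
  have hpdisj : (F : Set (ℝ × ℝ)).PairwiseDisjoint (fun q => Set.Icc q (q + ((1 : ℝ), (1 : ℝ)))) := by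
    intro a ha b hb hab
    rw [Finset.mem_coe, hF, Set.Finite.mem_toFinset] at ha hb
    exact Set.disjoint_iff_inter_eq_empty.2 (hdisj a ha.1 b hb.1 hab)
  -- volume of each unit square is 1
  have hvol : ∀ q : ℝ × ℝ, MeasureTheory.volume (Set.Icc q (q + (1, 1))) = 1 := by
    intro q
    rw [Set.Icc_prod_eq, MeasureTheory.Measure.volume_eq_prod, MeasureTheory.Measure.prod_prod,
      Real.volume_Icc, Real.volume_Icc]
    simp
  have hsum : ∑ q ∈ F, MeasureTheory.volume (Set.Icc q (q + ((1:ℝ), (1:ℝ))))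
      = MeasureTheory.volume (⋃ q ∈ F, Set.Icc q (q + ((1:ℝ),(1:ℝ)))) := by
    exact (MeasureTheory.measure_biUnion_finset hpdisj (fun q _ => measurableSet_Icc)).symm
  have hle : MeasureTheory.volume (⋃ q ∈ F, Set.Icc q (q + ((1:ℝ),(1:ℝ))))
      ≤ MeasureTheory.volume (Set.Icc (p - ((2:ℝ),(2:ℝ))) (p + ((3:ℝ),(3:ℝ)))) :=
    MeasureTheory.measure_mono (Set.iUnion₂_subset hbig)
  have hbigvol : MeasureTheory.volume (Set.Icc (p - ((2:ℝ),(2:ℝ))) (p + ((3:ℝ),(3:ℝ)))) = 25 := by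
    rw [Set.Icc_prod_eq, MeasureTheory.Measure.volume_eq_prod, MeasureTheory.Measure.prod_prod,
      Real.volume_Icc, Real.volume_Icc]
    simp only [Prod.fst_add, Prod.snd_add, Prod.fst_sub, Prod.snd_sub]
    rw [show p.1 + 3 - (p.1 - 2) = 5 by ring, show p.2 + 3 - (p.2 - 2) = 5 by ring]
    rw [← ENNReal.ofReal_mul (by norm_num)]
    norm_num
  have hcard : (F.card : ENNReal) ≤ 25 := by
    calc (F.card : ENNReal) = ∑ q ∈ F, MeasureTheory.volume (Set.Icc q (q + ((1:ℝ),(1:ℝ)))) := by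
          rw [Finset.sum_congr rfl (fun q _ => hvol q), Finset.sum_const, nsmul_eq_mul, mul_one]
      _ ≤ 25 := by rw [hsum]; exact hle.trans (le_of_eq hbigvol)
  have hcardn : F.card ≤ 25 := by exact_mod_cast hcard
  have : S.ncard = F.card := (Set.ncard_eq_toFinset_card' S).trans (by simp [hF])
  omega
end

section
/- Let ℓ = p + [0,1]² and ℓ' = p' + [0,1]² be closed unit-square labels anchored at their lower-left corners, where p' = p + (√2, 0). Then for α ∈ [0, 2π), the rotated labels ℓ(α) and ℓ'(α) intersect if and only if α ∈ {π/4, 3π/4, 5π/4, 7π/4}. -/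
open Real Set

lemma max_sub_max_neg (x : ℝ) : max x 0 - max (-x) 0 = x := by
  rcases le_total x 0 with h | h
  · rw [max_eq_right h, max_eq_left (by linarith : (0:ℝ) ≤ -x)]; ring
  · rw [max_eq_left h, max_eq_right (by linarith : -x ≤ (0:ℝ))]; ring

lemma inter_iff_aux (p : ℝ × ℝ) (α : ℝ) :
    (unitSq p α ∩ unitSq (p + (Real.sqrt 2, 0)) α).Nonempty ↔
      ∃ u v : ℝ × ℝ, u ∈ Set.Icc ((0,0):ℝ×ℝ) (1,1) ∧ v ∈ Set.Icc ((0,0):ℝ×ℝ) (1,1) ∧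
        u.1 - v.1 = Real.sqrt 2 * Real.cos α ∧ u.2 - v.2 = -(Real.sqrt 2 * Real.sin α) := by
  have hsc := Real.sin_sq_add_cos_sq α
  constructor
  · rintro ⟨x, ⟨u, hu, rfl⟩, ⟨v, hv, hx⟩⟩
    replace hx : p + (Real.sqrt 2, 0) + rot α v = p + rot α u := hx
    have e1 : (p + (Real.sqrt 2, 0) + rot α v).1 = (p + rot α u).1 := by rw [hx]
    have e2 : (p + (Real.sqrt 2, 0) + rot α v).2 = (p + rot α u).2 := by rw [hx]
    simp only [rot, Prod.fst_add, Prod.snd_add] at e1 e2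
    refine ⟨u, v, hu, hv, ?_, ?_⟩
    · linear_combination -Real.cos α * e1 - Real.sin α * e2 - (u.1 - v.1) * hsc
    · linear_combination Real.sin α * e1 - Real.cos α * e2 - (u.2 - v.2) * hsc
  · rintro ⟨u, v, hu, hv, h1, h2⟩
    refine ⟨p + rot α u, ⟨u, hu, rfl⟩, ⟨v, hv, ?_⟩⟩
    have g1 : (p + (Real.sqrt 2, 0) + rot α v).1 = (p + rot α u).1 := by
      simp only [rot, Prod.fst_add]
      linear_combination -Real.cos α * h1 + Real.sin α * h2 - Real.sqrt 2 * hsc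
    have g2 : (p + (Real.sqrt 2, 0) + rot α v).2 = (p + rot α u).2 := by
      simp only [rot, Prod.snd_add]
      linear_combination -Real.sin α * h1 - Real.cos α * h2
    exact Prod.ext g1 g2

/-- For two unit-square labels anchored at lower-left corners at distance `√2` on a
horizontal line, the rotated labels intersect at `α ∈ [0,2π)` exactly when
`α ∈ {π/4, 3π/4, 5π/4, 7π/4}`. -/
theorem unit_squares_sqrt_two_apart_conflicts (p : ℝ × ℝ) (α : ℝ)
    (hα : α ∈ Set.Ico (0 : ℝ) (2 * π)) :
    (unitSq p α ∩ unitSq (p + (Real.sqrt 2, 0)) α).Nonempty ↔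
      α ∈ ({π / 4, 3 * π / 4, 5 * π / 4, 7 * π / 4} : Set ℝ) := by
  obtain ⟨hα0, hα2⟩ := hα
  have h2 : (Real.sqrt 2) ^ 2 = 2 := Real.sq_sqrt (by norm_num)
  have hsc := Real.sin_sq_add_cos_sq α
  rw [inter_iff_aux]
  constructor
  · rintro ⟨u, v, hu, hv, h1, hdiff2⟩
    simp only [Set.mem_Icc, Prod.le_def] at hu hv
    obtain ⟨⟨hu1, hu2⟩, ⟨hu1', hu2'⟩⟩ := hu
    obtain ⟨⟨hv1, hv2⟩, ⟨hv1', hv2'⟩⟩ := hv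
    -- |√2 cos α| ≤ 1 and |√2 sin α| ≤ 1
    have b1 : Real.sqrt 2 * Real.cos α ≤ 1 := by linarith
    have b2 : -1 ≤ Real.sqrt 2 * Real.cos α := by linarith
    have b3 : Real.sqrt 2 * Real.sin α ≤ 1 := by linarith
    have b4 : -1 ≤ Real.sqrt 2 * Real.sin α := by linarith
    have hcos2 : Real.cos α ^ 2 = 1 / 2 := by nlinarith
    have hc2α : Real.cos (2 * α) = 0 := by
      rw [Real.cos_two_mul]; linarith
    obtain ⟨k, hk⟩ := Real.cos_eq_zero_iff.mp hc2α
    have hαk : α = (2 * (k:ℝ) + 1) * π / 4 := by linarith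
    have hπ := Real.pi_pos
    have hk0 : (0:ℤ) ≤ k := by
      by_contra h
      push_neg at h
      have hk1 : k ≤ -1 := by omega
      have : (k:ℝ) ≤ -1 := by exact_mod_cast hk1
      nlinarith
    have hk3 : k ≤ 3 := by
      by_contra h
      push_neg at h
      have : (4:ℝ) ≤ (k:ℝ) := by exact_mod_cast h
      nlinarith
    simp only [Set.mem_insert_iff, Set.mem_singleton_iff]
    interval_cases k
    · left; rw [hαk]; push_cast; ring
    · right; left; rw [hαk]; push_cast; ring
    · right; right; left; rw [hαk]; push_cast; ring
    · right; right; right; rw [hαk]; push_cast; ring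
  · intro hmem
    have hc2α : Real.cos (2 * α) = 0 := by
      rw [Real.cos_eq_zero_iff]
      simp only [Set.mem_insert_iff, Set.mem_singleton_iff] at hmem
      rcases hmem with rfl | rfl | rfl | rfl
      · exact ⟨0, by push_cast; ring⟩
      · exact ⟨1, by push_cast; ring⟩
      · exact ⟨2, by push_cast; ring⟩
      · exact ⟨3, by push_cast; ring⟩
    have hcos2 : Real.cos α ^ 2 = 1 / 2 := by
      have := Real.cos_two_mul α; linarith
    have hsin2 : Real.sin α ^ 2 = 1 / 2 := by linarith
    have hb1 : (Real.sqrt 2 * Real.cos α) ^ 2 = 1 := by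
      rw [mul_pow, h2, hcos2]; norm_num
    have hb2 : (Real.sqrt 2 * Real.sin α) ^ 2 = 1 := by
      rw [mul_pow, h2, hsin2]; norm_num
    set a := Real.sqrt 2 * Real.cos α with ha
    set b := -(Real.sqrt 2 * Real.sin α) with hb
    have ba1 : -1 ≤ a := by nlinarith
    have ba2 : a ≤ 1 := by nlinarith
    have bb1 : -1 ≤ b := by nlinarith
    have bb2 : b ≤ 1 := by nlinarith
    refine ⟨(max a 0, max b 0), (max (-a) 0, max (-b) 0), ?_, ?_, ?_, ?_⟩
    · simp only [Set.mem_Icc, Prod.le_def]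
      refine ⟨⟨le_max_right _ _, le_max_right _ _⟩, ⟨max_le ba2 (by norm_num), max_le bb2 (by norm_num)⟩⟩
    · simp only [Set.mem_Icc, Prod.le_def]
      refine ⟨⟨le_max_right _ _, le_max_right _ _⟩,
        ⟨max_le (by linarith) (by norm_num), max_le (by linarith) (by norm_num)⟩⟩
    · exact max_sub_max_neg a
    · exact max_sub_max_neg b
end
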